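/- Let θ(z) = Θ_{½,½}(z). Then: (i) θ is odd, i.e. θ(−z) = −θ(z) for all z ∈ ℂ; (ii) if ϑ = Θ_{ε,ε'} satisfies ϑ(0) ≠ 0 and θ'(0) ≠ 0, then the chiral torus kernel has the near-diagonal expansion lim_{z→0, z≠0} [ ϑ(z)·θ'(0)/(ϑ(0)·θ(z)) − 1/z ] = ϑ'(0)/ϑ(0). (This identifies the constant term π r_χ = ϑ'(0)/ϑ(0) in the expansion S_χ(z,w) = 1/(π(z−w)) + r_χ + O(z−w) of the kernel inverting the twisted ∂̄ operator on the torus; note the oddness of θ is what kills the would-be extra term.) -/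

import Mathlib

open Filter Topology

/-- Theta function with characteristics:
`Θ_{ε,ε'}(z) = Σ_{n∈ℤ} exp(2πi(½τ(n+ε)² + (n+ε)(z+ε')))`. -/
noncomputable def Theta (τ : ℂ) (ε ε' : ℝ) (z : ℂ) : ℂ :=
  ∑' n : ℤ, Complex.exp (2 * (Real.pi : ℂ) * Complex.I *
    ((1 / 2) * τ * ((n : ℂ) + (ε : ℂ)) ^ 2 + ((n : ℂ) + (ε : ℂ)) * (z + (ε' : ℂ))))

/-- `Theta` in terms of `jacobiTheta₂`. -/
lemma Theta_eq_jacobiTheta₂ (τ : ℂ) (ε ε' : ℝ) (z : ℂ) :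
    Theta τ ε ε' z =
      Complex.exp (2 * (Real.pi : ℂ) * Complex.I *
          ((1 / 2) * τ * (ε : ℂ) ^ 2 + (ε : ℂ) * (z + (ε' : ℂ)))) *
        jacobiTheta₂ (z + (ε' : ℂ) + (ε : ℂ) * τ) τ := by
  rw [Theta, jacobiTheta₂, ← tsum_mul_left]
  refine tsum_congr fun n => ?_
  rw [jacobiTheta₂_term, ← Complex.exp_add]
  congr 1
  ring

lemma Theta_differentiable (τ : ℂ) (hτ : 0 < τ.im) (ε ε' : ℝ) :
    Differentiable ℂ (Theta τ ε ε') := by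
  have h : Theta τ ε ε' = fun z =>
      Complex.exp (2 * (Real.pi : ℂ) * Complex.I *
          ((1 / 2) * τ * (ε : ℂ) ^ 2 + (ε : ℂ) * (z + (ε' : ℂ)))) *
        jacobiTheta₂ (z + (ε' : ℂ) + (ε : ℂ) * τ) τ :=
    funext (Theta_eq_jacobiTheta₂ τ ε ε')
  rw [h]
  intro z
  refine DifferentiableAt.mul ?_ ?_
  · apply DifferentiableAt.cexp
    fun_prop
  · have hin : DifferentiableAt ℂ (fun w : ℂ => w + ((ε' : ℂ) + (ε : ℂ) * τ)) z := by
      fun_prop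
    have := (differentiableAt_jacobiTheta₂_fst (z + ((ε' : ℂ) + (ε : ℂ) * τ)) hτ).comp z hin
    refine this.congr_of_eventuallyEq ?_
    filter_upwards with w
    show jacobiTheta₂ (w + (ε' : ℂ) + (ε : ℂ) * τ) τ = jacobiTheta₂ (w + ((ε' : ℂ) + (ε : ℂ) * τ)) τ
    rw [add_assoc]

lemma theta_term_odd (τ z : ℂ) (n : ℤ) :
    Complex.exp (2 * (Real.pi : ℂ) * Complex.I *
      ((1 / 2) * τ * (((-(n + 1) : ℤ) : ℂ) + (((1:ℝ)/2 : ℝ) : ℂ)) ^ 2 +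
        (((-(n + 1) : ℤ) : ℂ) + (((1:ℝ)/2 : ℝ) : ℂ)) * (-z + (((1:ℝ)/2 : ℝ) : ℂ)))) =
    -Complex.exp (2 * (Real.pi : ℂ) * Complex.I *
      ((1 / 2) * τ * ((n : ℂ) + (((1:ℝ)/2 : ℝ) : ℂ)) ^ 2 +
        ((n : ℂ) + (((1:ℝ)/2 : ℝ) : ℂ)) * (z + (((1:ℝ)/2 : ℝ) : ℂ)))) := by
  rw [show 2 * (Real.pi : ℂ) * Complex.I *
      ((1 / 2) * τ * (((-(n + 1) : ℤ) : ℂ) + (((1:ℝ)/2 : ℝ) : ℂ)) ^ 2 +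
        (((-(n + 1) : ℤ) : ℂ) + (((1:ℝ)/2 : ℝ) : ℂ)) * (-z + (((1:ℝ)/2 : ℝ) : ℂ))) =
      2 * (Real.pi : ℂ) * Complex.I *
      ((1 / 2) * τ * ((n : ℂ) + (((1:ℝ)/2 : ℝ) : ℂ)) ^ 2 +
        ((n : ℂ) + (((1:ℝ)/2 : ℝ) : ℂ)) * (z + (((1:ℝ)/2 : ℝ) : ℂ))) +
      (((-(n + 1) : ℤ) : ℂ) * (2 * (Real.pi : ℂ) * Complex.I) + (Real.pi : ℂ) * Complex.I)
    from by push_cast; ring]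
  rw [Complex.exp_add, Complex.exp_add, Complex.exp_int_mul_two_pi_mul_I,
    Complex.exp_pi_mul_I]
  ring

/-- Oddness of `θ = Θ_{½,½}`. -/
lemma Theta_odd (τ : ℂ) (z : ℂ) :
    Theta τ (1/2) (1/2) (-z) = -Theta τ (1/2) (1/2) z := by
  rw [Theta, Theta, ← tsum_neg]
  let e : ℤ ≃ ℤ :=
    ⟨fun n => -(n + 1), fun n => -(n + 1), fun n => by ring, fun n => by ring⟩
  calc
    (∑' n : ℤ, Complex.exp (2 * (Real.pi : ℂ) * Complex.I *
        ((1 / 2) * τ * ((n : ℂ) + ((1/2 : ℝ) : ℂ)) ^ 2 +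
          ((n : ℂ) + ((1/2 : ℝ) : ℂ)) * (-z + ((1/2 : ℝ) : ℂ)))))
        = ∑' n : ℤ, Complex.exp (2 * (Real.pi : ℂ) * Complex.I *
        ((1 / 2) * τ * (((e n : ℤ) : ℂ) + ((1/2 : ℝ) : ℂ)) ^ 2 +
          (((e n : ℤ) : ℂ) + ((1/2 : ℝ) : ℂ)) * (-z + ((1/2 : ℝ) : ℂ)))) :=
      (e.tsum_eq _).symm
    _ = ∑' n : ℤ, -Complex.exp (2 * (Real.pi : ℂ) * Complex.I *
        ((1 / 2) * τ * ((n : ℂ) + ((1/2 : ℝ) : ℂ)) ^ 2 +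
          ((n : ℂ) + ((1/2 : ℝ) : ℂ)) * (z + ((1/2 : ℝ) : ℂ)))) :=
      tsum_congr fun n => theta_term_odd τ z n

/-- Any function satisfies `f z = f 0 + z * dslope f 0 z`. -/
lemma eq_add_mul_dslope (f : ℂ → ℂ) (z : ℂ) : f z = f 0 + z * dslope f 0 z := by
  rcases eq_or_ne z 0 with h | h
  · simp [h]
  · rw [dslope_of_ne _ h, slope_def_field]
    field_simp
    ring

lemma analyticAt_dslope_zero {f : ℂ → ℂ} (hf : AnalyticAt ℂ f 0) :
    AnalyticAt ℂ (dslope f 0) 0 := by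
  obtain ⟨p, hp⟩ := hf
  exact ⟨_, hp.has_fpower_series_dslope_fslope⟩

/-- Abstract form of the near-diagonal expansion. -/
lemma aux_limit {θ ϑ : ℂ → ℂ} (hθ : AnalyticAt ℂ θ 0) (hϑ : AnalyticAt ℂ ϑ 0)
    (hodd : ∀ z, θ (-z) = -θ z) (h0 : ϑ 0 ≠ 0) (h1 : deriv θ 0 ≠ 0) :
    Tendsto (fun z : ℂ => ϑ z * deriv θ 0 / (ϑ 0 * θ z) - 1 / z)
      (𝓝[≠] 0) (𝓝 (deriv ϑ 0 / ϑ 0)) := by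
  have θ0 : θ 0 = 0 := by
    have h := hodd 0
    rw [neg_zero] at h
    linear_combination h / 2
  set φ : ℂ → ℂ := dslope θ 0 with hφdef
  have hφa : AnalyticAt ℂ φ 0 := analyticAt_dslope_zero hθ
  have θ_eq : ∀ z, θ z = z * φ z := fun z => by
    have := eq_add_mul_dslope θ z; rwa [θ0, zero_add] at this
  have φ0 : φ 0 = deriv θ 0 := dslope_same θ 0
  -- φ is even
  have heven : ∀ z, φ (-z) = φ z := by
    intro z
    rcases eq_or_ne z 0 with h | h
    · rw [h, neg_zero]
    · rw [hφdef, dslope_of_ne _ (neg_ne_zero.mpr h), dslope_of_ne _ h,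
        slope_def_field, slope_def_field, hodd, θ0]
      field_simp
      simp only [sub_zero]
      rw [neg_mul, neg_div_neg_eq, mul_div_assoc, div_self h, mul_one]
  have hφd : deriv φ 0 = 0 := by
    have hc : (fun z => φ (-z)) = φ := funext heven
    have h2 : deriv (fun z => φ (-z)) 0 = -deriv φ (-0) := deriv_comp_neg φ 0
    rw [hc, neg_zero] at h2
    linear_combination h2 / 2
  set B : ℂ → ℂ := dslope φ 0 with hBdef
  have hBa : AnalyticAt ℂ B 0 := analyticAt_dslope_zero hφa
  have hB0 : B 0 = 0 := by rw [hBdef, dslope_same, hφd]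
  have φ_eq : ∀ z, φ z = deriv θ 0 + z * B z := fun z => by
    have := eq_add_mul_dslope φ z; rwa [φ0] at this
  set ψ : ℂ → ℂ := dslope ϑ 0 with hψdef
  have hψa : AnalyticAt ℂ ψ 0 := analyticAt_dslope_zero hϑ
  have hψ0 : ψ 0 = deriv ϑ 0 := dslope_same ϑ 0
  have ϑ_eq : ∀ z, ϑ z = ϑ 0 + z * ψ z := fun z => eq_add_mul_dslope ϑ z
  set C : ℂ → ℂ := dslope ψ 0 with hCdef
  have hCa : AnalyticAt ℂ C 0 := analyticAt_dslope_zero hψa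
  have ψ_eq : ∀ z, ψ z = ψ 0 + z * C z := fun z => eq_add_mul_dslope ψ z
  -- the correction term
  have hden : ϑ 0 * φ 0 ≠ 0 := by
    rw [φ0]; exact mul_ne_zero h0 h1
  have hGc : ContinuousAt (fun z : ℂ =>
      (z * C z * deriv θ 0 - ϑ 0 * B z - z * ψ 0 * B z) / (ϑ 0 * φ z)) 0 := by
    refine ContinuousAt.div ?_ (continuousAt_const.mul hφa.continuousAt) hden
    exact (((continuousAt_id.mul hCa.continuousAt).mul continuousAt_const).sub
        (continuousAt_const.mul hBa.continuousAt)).sub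
      ((continuousAt_id.mul continuousAt_const).mul hBa.continuousAt)
  have hG0 : (fun z : ℂ =>
      (z * C z * deriv θ 0 - ϑ 0 * B z - z * ψ 0 * B z) / (ϑ 0 * φ z)) 0 = 0 := by
    simp [hB0]
  -- eventually θ z ≠ 0
  have hφne : ∀ᶠ z in 𝓝 0, φ z ≠ 0 := by
    have : φ 0 ≠ 0 := by rw [φ0]; exact h1
    exact hφa.continuousAt.eventually_ne this
  have key : ∀ (z d t0 p0 Bz Cz pz : ℂ), z ≠ 0 → t0 ≠ 0 → pz ≠ 0 →
      pz = d + z * Bz →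
      (t0 + z * (p0 + z * Cz)) * d / (t0 * (z * pz)) - 1 / z =
        (z * Cz * d - t0 * Bz - z * p0 * Bz) / (t0 * pz) + p0 / t0 := by
    intro z d t0 p0 Bz Cz pz hz ht0 hpz hpzeq
    subst hpzeq
    field_simp
    ring
  have hev : ∀ᶠ z in 𝓝[≠] (0 : ℂ),
      ϑ z * deriv θ 0 / (ϑ 0 * θ z) - 1 / z =
        (z * C z * deriv θ 0 - ϑ 0 * B z - z * ψ 0 * B z) / (ϑ 0 * φ z) +
          deriv ϑ 0 / ϑ 0 := by
    filter_upwards [self_mem_nhdsWithin, nhdsWithin_le_nhds hφne] with z hz' hφz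
    have hz : z ≠ 0 := hz'
    rw [θ_eq z, ϑ_eq z, ψ_eq z, ← hψ0]
    exact key z (deriv θ 0) (ϑ 0) (ψ 0) (B z) (C z) (φ z) hz h0 hφz (φ_eq z)
  have hlim : Tendsto (fun z : ℂ =>
      (z * C z * deriv θ 0 - ϑ 0 * B z - z * ψ 0 * B z) / (ϑ 0 * φ z) +
        deriv ϑ 0 / ϑ 0) (𝓝[≠] (0 : ℂ)) (𝓝 (deriv ϑ 0 / ϑ 0)) := by
    have h := (hGc.tendsto.mono_left nhdsWithin_le_nhds).add
      (tendsto_const_nhds (x := deriv ϑ 0 / ϑ 0) (f := 𝓝[≠] (0 : ℂ)))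
    simpa [hB0] using h
  exact hlim.congr' (hev.mono fun z h => h.symm)

/-- (i) `θ = Θ_{½,½}` is odd; (ii) if `ϑ = Θ_{ε,ε'}` has `ϑ(0) ≠ 0` and `θ'(0) ≠ 0`,
then the near-diagonal expansion of the chiral torus kernel holds:
`lim_{z→0} [ ϑ(z)θ'(0)/(ϑ(0)θ(z)) − 1/z ] = ϑ'(0)/ϑ(0)`. -/
theorem stmt8 (τ : ℂ) (hτ : 0 < τ.im) (ε ε' : ℝ) :
    (∀ z : ℂ, Theta τ (1/2) (1/2) (-z) = -Theta τ (1/2) (1/2) z) ∧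
    (Theta τ ε ε' 0 ≠ 0 → deriv (Theta τ (1/2) (1/2)) 0 ≠ 0 →
      Tendsto
        (fun z : ℂ =>
          Theta τ ε ε' z * deriv (Theta τ (1/2) (1/2)) 0 /
              (Theta τ ε ε' 0 * Theta τ (1/2) (1/2) z) -
            1 / z)
        (𝓝[≠] 0) (𝓝 (deriv (Theta τ ε ε') 0 / Theta τ ε ε' 0))) := by
  refine ⟨Theta_odd τ, fun h0 h1 => ?_⟩
  exact aux_limit ((Theta_differentiable τ hτ (1/2) (1/2)).analyticAt 0)
    ((Theta_differentiable τ hτ ε ε').analyticAt 0) (Theta_odd τ) h0 h1
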